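/- arXiv:1312.3836 — 2 statements merged into one kernel-verified Lean document; each statement's English description precedes it below -/
import Mathlib

section
/- Relabeling nodes of the arc-flow graph by their longest-path labels ψ (and merging nodes that receive identical labels, keeping one copy of parallel arcs with the same item label) preserves the set of achievable packing patterns: every multiset of item weights readable along an s–t path in the original graph whose dimension-wise sum is at most the capacity W is also readable along an s–t path of the compressed graph, and conversely every s–t path of the compressed graph yields a multiset of item weights whose dimension-wise sum is at most W. -/
inductive IsPath {V A : Type} (src dst : A → V) : V → V → List A → Prop
  | nil (v : V) : IsPath src dst v v []
  | cons (a : A) {v w : V} {l : List A} (h : src a = v)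
      (rest : IsPath src dst (dst a) w l) : IsPath src dst v w (a :: l)

/-- The multiset of items read along a path (loss arcs labeled `none` are skipped). -/
def pathItems {A I : Type} (lab : A → Option I) (l : List A) : Multiset I :=
  (l.filterMap lab : List I)

/-- The weight of an arc: the weight of its item, or zero for loss arcs. -/
def arcWeight {A I : Type} {p : ℕ} (lab : A → Option I) (w : I → Fin p → ℕ)
    (a : A) (d : Fin p) : ℕ :=
  match lab a with
  | none => 0
  | some i => w i d


lemma pathItems_sum {A I : Type} {p : ℕ} (lab : A → Option I) (w : I → Fin p → ℕ)
    (d : Fin p) (l : List A) :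
    ((pathItems lab l).map (fun i => w i d)).sum
      = (l.map (fun a => arcWeight lab w a d)).sum := by
  induction l with
  | nil => simp [pathItems]
  | cons a l ih =>
    cases h : lab a <;>
      simp [pathItems, List.filterMap_cons, h, arcWeight, ih] <;>
      simpa [pathItems, arcWeight] using ih

lemma isPath_append {V A : Type} {src dst : A → V} {u v : V} {l : List A}
    (hp : IsPath src dst u v l) (a : A) (ha : src a = v) :
    IsPath src dst u (dst a) (l ++ [a]) := by
  induction hp with
  | nil v => exact IsPath.cons a ha (IsPath.nil _)
  | cons b h rest ih => exact IsPath.cons b h (ih ha)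

lemma isPath_map {V A : Type} {W' : Type} (f : V → W') {src dst : A → V}
    {u v : V} {l : List A} (hp : IsPath src dst u v l) :
    IsPath (f ∘ src) (f ∘ dst) (f u) (f v) l := by
  induction hp with
  | nil v => exact IsPath.nil _
  | cons a h rest ih => exact IsPath.cons a (by simp [Function.comp, h]) ih

lemma exists_max_path {V A I : Type} {p : ℕ}
    (src dst : A → V) (lab : A → Option I) (w : I → Fin p → ℕ) (s : V)
    (ord : V → ℕ) (hdag : ∀ a : A, ord (src a) < ord (dst a))
    (ψ : V → Fin p → ℕ) (hψs : ∀ d, ψ s d = 0)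
    (hψmax : ∀ v, v ≠ s → ∀ d, ∃ a : A, dst a = v ∧
      ψ v d = ψ (src a) d + arcWeight lab w a d)
    (d : Fin p) :
    ∀ v, ∃ l, IsPath src dst s v l ∧
      (l.map (fun a => arcWeight lab w a d)).sum = ψ v d := by
  suffices H : ∀ n v, ord v ≤ n → ∃ l, IsPath src dst s v l ∧
      (l.map (fun a => arcWeight lab w a d)).sum = ψ v d by
    exact fun v => H (ord v) v le_rfl
  intro n
  induction n with
  | zero =>
    intro v hv
    by_cases h : v = s
    · subst h; exact ⟨[], IsPath.nil _, by simp [hψs d]⟩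
    · obtain ⟨a, ha, _⟩ := hψmax v h d
      exact absurd (ha ▸ hdag a) (by omega)
  | succ n ih =>
    intro v hv
    by_cases h : v = s
    · subst h; exact ⟨[], IsPath.nil _, by simp [hψs d]⟩
    · obtain ⟨a, ha, heq⟩ := hψmax v h d
      have hlt : ord (src a) ≤ n := by have := ha ▸ hdag a; omega
      obtain ⟨l, hl, hsum⟩ := ih (src a) hlt
      refine ⟨l ++ [a], ha ▸ isPath_append hl a rfl, ?_⟩
      simp [hsum, heq]

lemma path_sum_le {V A I : Type} {p : ℕ} {src dst : A → V}
    (lab : A → Option I) (w : I → Fin p → ℕ)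
    (ψ : V → Fin p → ℕ)
    (hψmono : ∀ (a : A) (d : Fin p),
      ψ (src a) d + arcWeight lab w a d ≤ ψ (dst a) d)
    (d : Fin p) :
    ∀ {x y : Fin p → ℕ} {m : List A},
      IsPath (ψ ∘ src) (ψ ∘ dst) x y m →
      x d + (m.map (fun a => arcWeight lab w a d)).sum ≤ y d := by
  intro x y m hm
  induction hm with
  | nil v => simp
  | cons a h rest ih =>
    subst h
    simp only [List.map_cons, List.sum_cons, Function.comp] at *
    have h1 := hψmono a d
    omega

/-- Relabeling the nodes of a valid arc-flow graph by the longest-path labels ψ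
(merging nodes with equal labels) preserves the set of achievable packing patterns:
every item multiset readable along an s–t path of the original graph with total
weight ≤ W is readable along an s–t path of the compressed graph (which has node
set `ψ '' V`, source/target maps `ψ ∘ src`, `ψ ∘ dst`), and conversely every s–t
path of the compressed graph reads a multiset of items of total weight ≤ W. -/
theorem compression_preserves_patterns
    {V A I : Type} [Fintype V] [Fintype A]
    (src dst : A → V) (lab : A → Option I)
    (p : ℕ) (w : I → Fin p → ℕ) (W : Fin p → ℕ) (s t : V)
    (ord : V → ℕ) (hdag : ∀ a : A, ord (src a) < ord (dst a))
    (hsource : ∀ a : A, dst a ≠ s)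
    -- every node lies on some s–t path
    (honpath : ∀ v : V, (∃ l, IsPath src dst s v l) ∧ (∃ l, IsPath src dst v t l))
    -- validity: every s–t path of G is a feasible pattern for capacity W
    (hvalid : ∀ l : List A, IsPath src dst s t l →
      ∀ d, ((pathItems lab l).map (fun i => w i d)).sum ≤ W d)
    -- ψ is the longest-path labeling
    (ψ : V → Fin p → ℕ)
    (hψs : ∀ d, ψ s d = 0)
    (hψmax : ∀ v, v ≠ s → ∀ d, ∃ a : A, dst a = v ∧
      ψ v d = ψ (src a) d + arcWeight lab w a d)
    (hψmono : ∀ (a : A) (d : Fin p),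
      ψ (src a) d + arcWeight lab w a d ≤ ψ (dst a) d) :
    (∀ l : List A, IsPath src dst s t l →
      (∀ d, ((pathItems lab l).map (fun i => w i d)).sum ≤ W d) →
      ∃ l' : List A, IsPath (ψ ∘ src) (ψ ∘ dst) (ψ s) (ψ t) l' ∧
        pathItems lab l' = pathItems lab l) ∧
    (∀ l' : List A, IsPath (ψ ∘ src) (ψ ∘ dst) (ψ s) (ψ t) l' →
      ∀ d, ((pathItems lab l').map (fun i => w i d)).sum ≤ W d) := by
  constructor
  · intro l hl _
    exact ⟨l, isPath_map ψ hl, rfl⟩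
  · intro l' hl' d
    obtain ⟨l, hl, hsum⟩ := exists_max_path src dst lab w s ord hdag ψ hψs hψmax d t
    have hψtW : ψ t d ≤ W d := by
      have := hvalid l hl d
      rwa [pathItems_sum, hsum] at this
    have := path_sum_le lab w ψ hψmono d hl'
    rw [hψs d] at this
    rw [pathItems_sum]
    omega
end

section
/- If in the MVBP arc-flow model the equality constraints Σ f = b_k are imposed only for item types k with b_k = 1 (set J = {k : b_k = 1}) and inequality constraints Σ f ≥ b_k for the rest, the optimal objective value is unchanged compared to imposing inequality constraints for all item types. -/
set_option linter.unusedSectionVars false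

namespace MVBPaux

variable {V A : Type} [Fintype V] [Fintype A] [DecidableEq V] [DecidableEq A]
variable {src dst : A → V}

lemma path_append {u v w : V} {l l' : List A} (h : IsPath src dst u v l) :
    IsPath src dst v w l' → IsPath src dst u w (l ++ l') := by
  induction h with
  | nil => exact fun h' => h'
  | cons a ha rest ih => exact fun h' => IsPath.cons a ha (ih h')

lemma path_nil_eq {u v : V} (h : IsPath src dst u v ([] : List A)) : u = v := by
  cases h; rfl

lemma path_single (a : A) {v : V} (h : dst a = v) : IsPath src dst (src a) v [a] :=
  IsPath.cons a rfl (by rw [h]; exact IsPath.nil v)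

lemma snoc_decomp {u v : V} {l : List A} (h : IsPath src dst u v l) (hne : l ≠ []) :
    ∃ l₀ a, l = l₀ ++ [a] ∧ IsPath src dst u (src a) l₀ ∧ dst a = v := by
  induction h with
  | nil => exact absurd rfl hne
  | cons a ha rest ih =>
    rename_i v' w' l'
    by_cases hl : l' = []
    · subst hl
      refine ⟨[], a, rfl, ?_, path_nil_eq rest⟩
      rw [← ha]; exact IsPath.nil _
    · obtain ⟨l₀, b, rfl, hl₀, hb⟩ := ih hl
      exact ⟨a :: l₀, b, rfl, IsPath.cons a ha hl₀, hb⟩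

variable {ord : V → ℕ}

lemma ord_src_le (hdag : ∀ a : A, ord (src a) < ord (dst a))
    {u v : V} {l : List A} (h : IsPath src dst u v l) :
    ∀ a ∈ l, ord u ≤ ord (src a) := by
  induction h with
  | nil => intro a ha; cases ha
  | cons a ha rest ih =>
    intro b hb
    rcases List.mem_cons.mp hb with rfl | hb'
    · rw [ha]
    · have h1 : ord (dst a) ≤ ord (src b) := ih b hb'
      have h2 := hdag a
      rw [← ha]; omega

lemma path_nodup (hdag : ∀ a : A, ord (src a) < ord (dst a))
    {u v : V} {l : List A} (h : IsPath src dst u v l) : l.Nodup := by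
  induction h with
  | nil => exact List.nodup_nil
  | cons a ha rest ih =>
    refine List.nodup_cons.mpr ⟨fun hmem => ?_, ih⟩
    have := ord_src_le hdag rest a hmem
    have := hdag a
    omega

lemma start_ne {t u v : V} {l : List A} (ht_noout : ∀ a : A, src a ≠ t)
    (h : IsPath src dst u v l) (hv : v ≠ t) : u ≠ t := by
  cases h with
  | nil => exact hv
  | cons a ha rest => intro h'; exact ht_noout a (ha.trans h')

lemma no_dst_t {t u v : V} {l : List A} (ht_noout : ∀ a : A, src a ≠ t)
    (h : IsPath src dst u v l) (hv : v ≠ t) : ∀ b ∈ l, dst b ≠ t := by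
  induction h with
  | nil => intro b hb; cases hb
  | cons a ha rest ih =>
    intro b hb
    rcases List.mem_cons.mp hb with rfl | hb'
    · intro hdt
      cases rest with
      | nil => exact hv hdt
      | cons a' ha' rest' => exact ht_noout a' (by rw [ha', hdt])
    · exact ih hv b hb'

lemma count_eq_zero_of_path {t u v : V} {l : List A} (ht_noout : ∀ a : A, src a ≠ t)
    (h : IsPath src dst u v l) (hv : v ≠ t) {e : A} (he : dst e = t) : l.count e = 0 :=
  List.count_eq_zero.mpr (fun hmem => no_dst_t ht_noout h hv e hmem he)

lemma sum_if_count (P : A → Prop) [DecidablePred P] (l : List A) :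
    (∑ a : A, if P a then l.count a else 0) = l.countP (fun a => decide (P a)) := by
  induction l with
  | nil => simp
  | cons b l ih =>
    rw [List.countP_cons]
    have hsplit : ∀ a : A, (if P a then (b :: l).count a else 0)
        = (if P a then l.count a else 0) + (if a = b then (if P a then 1 else 0) else 0) := by
      intro a
      by_cases h2 : a = b
      · subst h2
        by_cases h1 : P a <;> simp [h1, List.count_cons]
      · simp [h2, Ne.symm h2, List.count_cons]
    rw [Finset.sum_congr rfl (fun a _ => hsplit a), Finset.sum_add_distrib, ih,
      Finset.sum_ite_eq' Finset.univ b (fun a => if P a then 1 else 0)]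
    simp

lemma path_cons_count {u v : V} {l : List A} (h : IsPath src dst u v l) (w : V) :
    l.countP (fun a => decide (dst a = w)) + (if w = u then 1 else 0)
      = l.countP (fun a => decide (src a = w)) + (if w = v then 1 else 0) := by
  induction h with
  | nil => rfl
  | cons a ha rest ih =>
    subst ha
    simp only [List.countP_cons, decide_eq_true_eq]
    have e1 : (if w = dst a then (1:ℕ) else 0) = (if dst a = w then 1 else 0) := by
      rcases eq_or_ne w (dst a) with h | h
      · simp [h]
      · rw [if_neg h, if_neg (fun hh : dst a = w => h hh.symm)]
    have e2 : (if src a = w then (1:ℕ) else 0) = (if w = src a then 1 else 0) := by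
      rcases eq_or_ne (src a) w with h | h
      · simp [h]
      · rw [if_neg h, if_neg (fun hh : w = src a => h hh.symm)]
    have ih' := ih
    rw [e1] at ih'
    rw [e2]
    omega

lemma exists_pos_of_sum_pos {g : A → ℕ} (P : A → Prop) [DecidablePred P]
    (h : 0 < ∑ a : A, if P a then g a else 0) : ∃ a, P a ∧ 0 < g a := by
  by_contra hc
  push_neg at hc
  have : (∑ a : A, if P a then g a else 0) = 0 := Finset.sum_eq_zero (fun a _ => by
    by_cases hP : P a
    · simp [hP, Nat.le_zero.mp (hc a hP)]
    · simp [hP])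
  omega

lemma term_le_sum {g : A → ℕ} (P : A → Prop) [DecidablePred P] (a : A) (hP : P a) :
    g a ≤ ∑ a' : A, if P a' then g a' else 0 := by
  have := Finset.single_le_sum (f := fun a' => if P a' then g a' else 0)
    (fun i _ => Nat.zero_le _) (Finset.mem_univ a)
  simpa [hP] using this

variable {s t : V}

lemma zero_flow (hdag : ∀ a : A, ord (src a) < ord (dst a)) (f : A → ℕ)
    (hcons : ∀ v : V, (∑ a : A, if dst a = v then f a else 0)
      = (∑ a : A, if src a = v then f a else 0)) :
    ∀ a, f a = 0 := by
  by_contra hne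
  push_neg at hne
  obtain ⟨a₀, ha₀⟩ := hne
  have hSS : (Finset.univ.filter (fun a : A => 0 < f a)).Nonempty :=
    ⟨a₀, by simp; omega⟩
  obtain ⟨a, haSS, hmax⟩ := Finset.exists_max_image _ (fun a => ord (dst a)) hSS
  have hfa : 0 < f a := (Finset.mem_filter.mp haSS).2
  have hin : 0 < ∑ a' : A, if dst a' = dst a then f a' else 0 :=
    lt_of_lt_of_le hfa (term_le_sum _ a rfl)
  rw [hcons (dst a)] at hin
  obtain ⟨a', ha', hfa'⟩ := exists_pos_of_sum_pos _ hin
  have h1 := hmax a' (Finset.mem_filter.mpr ⟨Finset.mem_univ _, hfa'⟩)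
  have h2 := hdag a'
  rw [ha'] at h2
  omega

lemma walk (hdag : ∀ a : A, ord (src a) < ord (dst a))
    (hs_noin : ∀ a : A, dst a ≠ s) (f : A → ℕ)
    (hcons : ∀ v : V, v ≠ s → v ≠ t →
      (∑ a : A, if dst a = v then f a else 0) = (∑ a : A, if src a = v then f a else 0)) :
    ∀ (n : ℕ) (v : V), v ≠ t → Finset.univ.sup ord < ord v + n →
      0 < (∑ a : A, if src a = v then f a else 0) →
      ∃ l, IsPath src dst v t l ∧ ∀ a ∈ l, 0 < f a := by
  intro n
  induction n with
  | zero =>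
    intro v _ hbound _
    have := Finset.le_sup (f := ord) (Finset.mem_univ v)
    omega
  | succ n ih =>
    intro v hv hbound hout
    obtain ⟨a, ha, hfa⟩ := exists_pos_of_sum_pos _ hout
    by_cases hdt : dst a = t
    · refine ⟨[a], ?_, ?_⟩
      · rw [← ha]; exact path_single a hdt
      · intro b hb; rcases List.mem_singleton.mp hb with rfl; exact hfa
    · have hcw := hcons (dst a) (hs_noin a) hdt
      have hin : 0 < ∑ a' : A, if dst a' = dst a then f a' else 0 :=
        lt_of_lt_of_le hfa (term_le_sum _ a rfl)
      rw [hcw] at hin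
      have hb2 : Finset.univ.sup ord < ord (dst a) + n := by
        have := hdag a; rw [ha] at this; omega
      obtain ⟨l, hl, hlf⟩ := ih (dst a) hdt hb2 hin
      refine ⟨a :: l, IsPath.cons a ha hl, ?_⟩
      intro b hb
      rcases List.mem_cons.mp hb with rfl | hb'
      · exact hfa
      · exact hlf b hb'

lemma decomp (hdag : ∀ a : A, ord (src a) < ord (dst a))
    (hs_noin : ∀ a : A, dst a ≠ s) (hst : s ≠ t) :
    ∀ (z : ℕ) (f : A → ℕ),
    (∀ v : V, (∑ a : A, if dst a = v then f a else 0) + (if v = s then z else 0)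
        = (∑ a : A, if src a = v then f a else 0) + (if v = t then z else 0)) →
    ∃ PL : List (List A), PL.length = z ∧ (∀ l ∈ PL, IsPath src dst s t l) ∧
      ∀ a, f a = (PL.map (fun l => l.count a)).sum := by
  intro z
  induction z with
  | zero =>
    intro f hcons
    refine ⟨[], rfl, by simp, ?_⟩
    have h0 : ∀ v : V, (∑ a : A, if dst a = v then f a else 0)
        = (∑ a : A, if src a = v then f a else 0) := by
      intro v; have := hcons v; simpa using this
    intro a; simp [zero_flow hdag f h0 a]
  | succ z ih =>
    intro f hcons
    have hins : (∑ a : A, if dst a = s then f a else 0) = 0 :=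
      Finset.sum_eq_zero (fun a _ => by simp [hs_noin a])
    have hcs := hcons s
    rw [if_pos rfl, if_neg hst, hins] at hcs
    have hout : 0 < ∑ a : A, if src a = s then f a else 0 := by omega
    have hconsw : ∀ v : V, v ≠ s → v ≠ t →
        (∑ a : A, if dst a = v then f a else 0) = (∑ a : A, if src a = v then f a else 0) := by
      intro v hvs hvt
      have := hcons v
      rw [if_neg hvs, if_neg hvt] at this
      omega
    obtain ⟨l, hl, hlf⟩ := walk hdag hs_noin f hconsw (Finset.univ.sup ord + 1) s hst
      (by omega) hout
    have hnd : l.Nodup := path_nodup hdag hl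
    have hcount : ∀ a, l.count a ≤ f a := by
      intro a
      by_cases hm : a ∈ l
      · exact le_trans (List.nodup_iff_count_le_one.mp hnd a) (hlf a hm)
      · simp [List.count_eq_zero_of_not_mem hm]
    have hcons₂ : ∀ v : V,
        (∑ a : A, if dst a = v then f a - l.count a else 0) + (if v = s then z else 0)
        = (∑ a : A, if src a = v then f a - l.count a else 0) + (if v = t then z else 0) := by
      intro v
      have hA : (∑ a : A, if dst a = v then f a - l.count a else 0)
          = (∑ a : A, if dst a = v then f a else 0) - (∑ a : A, if dst a = v then l.count a else 0) := by
        rw [← Finset.sum_tsub_distrib _ (fun a _ => by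
          by_cases h : dst a = v <;> simp [h, hcount a])]
        exact Finset.sum_congr rfl (fun a _ => by by_cases h : dst a = v <;> simp [h])
      have hB : (∑ a : A, if src a = v then f a - l.count a else 0)
          = (∑ a : A, if src a = v then f a else 0) - (∑ a : A, if src a = v then l.count a else 0) := by
        rw [← Finset.sum_tsub_distrib _ (fun a _ => by
          by_cases h : src a = v <;> simp [h, hcount a])]
        exact Finset.sum_congr rfl (fun a _ => by by_cases h : src a = v <;> simp [h])
      have hle1 : (∑ a : A, if dst a = v then l.count a else 0)
          ≤ (∑ a : A, if dst a = v then f a else 0) :=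
        Finset.sum_le_sum (fun a _ => by by_cases h : dst a = v <;> simp [h, hcount a])
      have hle2 : (∑ a : A, if src a = v then l.count a else 0)
          ≤ (∑ a : A, if src a = v then f a else 0) :=
        Finset.sum_le_sum (fun a _ => by by_cases h : src a = v <;> simp [h, hcount a])
      have hPC := path_cons_count hl v
      rw [← sum_if_count (fun a => dst a = v) l, ← sum_if_count (fun a => src a = v) l] at hPC
      have hcv := hcons v
      rw [hA, hB]
      rcases eq_or_ne v s with rfl | hvs
      · rw [if_pos rfl, if_neg hst] at *
        omega
      · rcases eq_or_ne v t with rfl | hvt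
        · rw [if_neg hvs, if_pos rfl] at *
          omega
        · rw [if_neg hvs, if_neg hvt] at *
          omega
    obtain ⟨PL, hlen, hpaths, hdec⟩ := ih (fun a => f a - l.count a) hcons₂
    refine ⟨l :: PL, by simp [hlen], ?_, ?_⟩
    · intro l' hl'
      rcases List.mem_cons.mp hl' with rfl | h'
      · exact hl
      · exact hpaths l' h'
    · intro a
      have := hdec a
      simp only [List.map_cons, List.sum_cons]
      have := hcount a
      omega

lemma flow_sum (P : A → Prop) [DecidablePred P] :
    ∀ PL : List (List A), (∑ a : A, if P a then (PL.map (fun l => l.count a)).sum else 0)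
      = (PL.map (fun l => l.countP (fun a => decide (P a)))).sum := by
  intro PL
  induction PL with
  | nil => simp
  | cons l PL ih =>
    simp only [List.map_cons, List.sum_cons]
    rw [← ih, ← sum_if_count P l, ← Finset.sum_add_distrib]
    exact Finset.sum_congr rfl (fun a _ => by by_cases h : P a <;> simp [h])

lemma flows_conservation (PL : List (List A)) {u v : V}
    (hp : ∀ l ∈ PL, IsPath src dst u v l) (w : V) :
    (PL.map (fun l => l.countP (fun a => decide (dst a = w)))).sum
        + (if w = u then PL.length else 0)
      = (PL.map (fun l => l.countP (fun a => decide (src a = w)))).sum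
        + (if w = v then PL.length else 0) := by
  induction PL with
  | nil => simp
  | cons l PL ih =>
    have h1 := path_cons_count (hp l List.mem_cons_self) w
    have h2 := ih (fun l' hl' => hp l' (List.mem_cons_of_mem l hl'))
    simp only [List.map_cons, List.sum_cons, List.length_cons]
    rcases eq_or_ne w u with rfl | hwu
    · rw [if_pos rfl] at *
      rcases eq_or_ne w v with rfl | hwv
      · rw [if_pos rfl] at *; omega
      · rw [if_neg hwv] at *; omega
    · rw [if_neg hwu] at *
      rcases eq_or_ne w v with rfl | hwv
      · rw [if_pos rfl] at *; omega
      · rw [if_neg hwv] at *; omega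

lemma split_le_sum {X : Type} [DecidableEq X] :
    ∀ (Ms : List (Multiset X)) (N : Multiset X), N ≤ Ms.sum →
      ∃ Ns : List (Multiset X), List.Forall₂ (· ≤ ·) Ns Ms ∧ Ns.sum = N := by
  intro Ms
  induction Ms with
  | nil =>
    intro N hN
    refine ⟨[], List.Forall₂.nil, ?_⟩
    simp only [List.sum_nil] at hN ⊢
    exact (Multiset.le_zero.mp hN).symm
  | cons M Ms ih =>
    intro N hN
    rw [List.sum_cons] at hN
    have h1 : N - M ≤ Ms.sum := by
      rw [tsub_le_iff_right]
      rwa [add_comm] at hN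
    obtain ⟨Ns, hF, hsum⟩ := ih (N - M) h1
    refine ⟨N ∩ M :: Ns, List.Forall₂.cons Multiset.inter_le_right hF, ?_⟩
    rw [List.sum_cons, hsum]
    ext y
    rw [Multiset.count_add, Multiset.count_inter, Multiset.count_sub]
    omega

lemma countP_items_list {m : ℕ} {nJ : Fin m → ℕ}
    (lab : A → Option (Σ i : Fin m, Fin (nJ i))) (k : Fin m) :
    ∀ l : List A, l.countP (fun a => decide (∃ j, lab a = some ⟨k, j⟩))
      = (l.filterMap lab).countP (fun x => decide (x.1 = k)) := by
  intro l
  induction l with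
  | nil => simp
  | cons a l ih =>
    rw [List.countP_cons]
    cases hla : lab a with
    | none =>
      have hfalse : ¬ (∃ j, lab a = some ⟨k, j⟩) := by rintro ⟨j, hj⟩; rw [hla] at hj; cases hj
      rw [List.filterMap_cons_none hla, ih]
      simp [hfalse]
    | some x =>
      have hiff : (∃ j, (some x : Option (Σ i : Fin m, Fin (nJ i))) = some ⟨k, j⟩) ↔ x.1 = k := by
        constructor
        · rintro ⟨j, hj⟩
          have : x = ⟨k, j⟩ := Option.some.inj hj
          rw [this]
        · rintro rfl
          exact ⟨x.2, rfl⟩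
      rw [List.filterMap_cons_some hla, List.countP_cons, ih,
        decide_eq_decide.mpr hiff]

lemma countP_items {m : ℕ} {nJ : Fin m → ℕ}
    (lab : A → Option (Σ i : Fin m, Fin (nJ i))) (k : Fin m) (l : List A) :
    l.countP (fun a => decide (∃ j, lab a = some ⟨k, j⟩))
      = Multiset.countP (fun x => x.1 = k) (pathItems lab l) := by
  rw [countP_items_list lab k l]
  rfl

variable {q m : ℕ} {st tt : Fin q → V} {bt : A → Fin q}
variable {nJ : Fin m → ℕ} {lab : A → Option (Σ i : Fin m, Fin (nJ i))}

lemma path_cons_src {u v : V} {c : A} {rest : List A}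
    (h : IsPath src dst u v (c :: rest)) : src c = u := by
  cases h; assumption

lemma pathItems_append (l l' : List A) :
    pathItems lab (l ++ l') = pathItems lab l + pathItems lab l' := by
  simp [pathItems, List.filterMap_append]

lemma itemless_prefix
    (hdag : ∀ a : A, ord (src a) < ord (dst a))
    (honpath : ∀ a : A, ∃ l₁ l₂ : List A,
      IsPath src dst s (src a) l₁ ∧ IsPath src dst (dst a) t l₂)
    (harc_t : ∀ a : A, dst a = t → src a = tt (bt a) ∧ lab a = none)
    (hthrough : ∀ l : List A, IsPath src dst s t l → ∀ a ∈ l, dst a = t →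
      ∃ mid : List A, IsPath src dst (st (bt a)) (tt (bt a)) mid ∧
        pathItems lab mid = pathItems lab l)
    (a : A) (ha : dst a = t) :
    ∃ pfx, IsPath src dst s (st (bt a)) pfx ∧ pathItems lab pfx = 0 := by
  obtain ⟨hsrc, hlab⟩ := harc_t a ha
  obtain ⟨l₁, l₂, h₁, h₂⟩ := honpath a
  have hQ0 : IsPath src dst s t (l₁ ++ [a]) := path_append h₁ (path_single a ha)
  obtain ⟨mid₀, hmid₀, _⟩ := hthrough _ hQ0 a (by simp) ha
  have hfin : {l : List A | IsPath src dst (st (bt a)) (tt (bt a)) l}.Finite :=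
    Set.Finite.subset (List.finite_length_le A (Fintype.card A))
      (fun l hl => (path_nodup hdag hl).length_le_card)
  have hne : hfin.toFinset.Nonempty := ⟨mid₀, hfin.mem_toFinset.mpr hmid₀⟩
  obtain ⟨Mx, hMxmem, hmax⟩ := Finset.exists_max_image hfin.toFinset
    (fun l => Multiset.card (pathItems lab l)) hne
  have hMxP : IsPath src dst (st (bt a)) (tt (bt a)) Mx := hfin.mem_toFinset.mp hMxmem
  have hp : ∃ p, IsPath src dst s (st (bt a)) p := by
    match Mx, hMxP with
    | [], hMxP =>
      have he : st (bt a) = tt (bt a) := path_nil_eq hMxP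
      refine ⟨l₁, ?_⟩
      have : src a = st (bt a) := by rw [hsrc, ← he]
      rwa [this] at h₁
    | c :: rest, hMxP =>
      have hc : src c = st (bt a) := path_cons_src hMxP
      obtain ⟨p₁, _, hp₁, _⟩ := honpath c
      exact ⟨p₁, by rwa [hc] at hp₁⟩
  obtain ⟨p, hpP⟩ := hp
  have hQ : IsPath src dst s t (p ++ (Mx ++ [a])) :=
    path_append hpP (path_append hMxP (by rw [← hsrc]; exact path_single a ha))
  obtain ⟨mid', hmid', hitems⟩ := hthrough _ hQ a (by simp) ha
  have hIt : pathItems lab (p ++ (Mx ++ [a]))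
      = pathItems lab p + pathItems lab Mx := by
    rw [pathItems_append, pathItems_append]
    simp [pathItems, hlab]
  have hcard := hmax mid' (hfin.mem_toFinset.mpr hmid')
  rw [hitems, hIt, Multiset.card_add] at hcard
  have hzero : Multiset.card (pathItems lab p) = 0 := by omega
  exact ⟨p, hpP, Multiset.card_eq_zero.mp hzero⟩

lemma replace_path
    (hdag : ∀ a : A, ord (src a) < ord (dst a))
    (hst : s ≠ t)
    (honpath : ∀ a : A, ∃ l₁ l₂ : List A,
      IsPath src dst s (src a) l₁ ∧ IsPath src dst (dst a) t l₂)
    (harc_t : ∀ a : A, dst a = t → src a = tt (bt a) ∧ lab a = none)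
    (ht_noout : ∀ a : A, src a ≠ t)
    (hthrough : ∀ l : List A, IsPath src dst s t l → ∀ a ∈ l, dst a = t →
      ∃ mid : List A, IsPath src dst (st (bt a)) (tt (bt a)) mid ∧
        pathItems lab mid = pathItems lab l)
    (hdownward : ∀ (τ : Fin q) (l : List A) (S' : Multiset (Σ i : Fin m, Fin (nJ i))),
      IsPath src dst (st τ) (tt τ) l → S' ≤ pathItems lab l →
      ∃ l' : List A, IsPath src dst (st τ) (tt τ) l' ∧ pathItems lab l' = S')
    (l : List A) (hl : IsPath src dst s t l)
    (N : Multiset (Σ i : Fin m, Fin (nJ i))) (hN : N ≤ pathItems lab l) :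
    ∃ l', IsPath src dst s t l' ∧ pathItems lab l' = N ∧
      ∀ e, dst e = t → l'.count e = l.count e := by
  have hlne : l ≠ [] := by rintro rfl; exact hst (path_nil_eq hl)
  obtain ⟨l₀, a, rfl, hl₀, hat⟩ := snoc_decomp hl hlne
  obtain ⟨hsrc, hlab⟩ := harc_t a hat
  obtain ⟨mid, hmid, hmidI⟩ := hthrough _ hl a (by simp) hat
  obtain ⟨l'', hl'', hl''I⟩ := hdownward (bt a) mid N hmid (by rw [hmidI]; exact hN)
  obtain ⟨pfx, hpfx, hpfxI⟩ := itemless_prefix hdag honpath harc_t hthrough a hat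
  have htt_ne : tt (bt a) ≠ t := fun h => ht_noout a (hsrc.trans h)
  have hstt_ne : st (bt a) ≠ t := start_ne ht_noout hmid htt_ne
  refine ⟨pfx ++ (l'' ++ [a]), ?_, ?_, ?_⟩
  · exact path_append hpfx (path_append hl'' (by rw [← hsrc]; exact path_single a hat))
  · rw [pathItems_append, pathItems_append, hpfxI, hl''I]
    simp [pathItems, hlab]
  · intro e het
    have h1 : pfx.count e = 0 := count_eq_zero_of_path ht_noout hpfx hstt_ne het
    have h2 : l''.count e = 0 := count_eq_zero_of_path ht_noout hl'' htt_ne het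
    have h3 : l₀.count e = 0 := count_eq_zero_of_path ht_noout hl₀ (ht_noout a) het
    simp [List.count_append, h1, h2, h3]

lemma replace_all
    (hdag : ∀ a : A, ord (src a) < ord (dst a))
    (hst : s ≠ t)
    (honpath : ∀ a : A, ∃ l₁ l₂ : List A,
      IsPath src dst s (src a) l₁ ∧ IsPath src dst (dst a) t l₂)
    (harc_t : ∀ a : A, dst a = t → src a = tt (bt a) ∧ lab a = none)
    (ht_noout : ∀ a : A, src a ≠ t)
    (hthrough : ∀ l : List A, IsPath src dst s t l → ∀ a ∈ l, dst a = t →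
      ∃ mid : List A, IsPath src dst (st (bt a)) (tt (bt a)) mid ∧
        pathItems lab mid = pathItems lab l)
    (hdownward : ∀ (τ : Fin q) (l : List A) (S' : Multiset (Σ i : Fin m, Fin (nJ i))),
      IsPath src dst (st τ) (tt τ) l → S' ≤ pathItems lab l →
      ∃ l' : List A, IsPath src dst (st τ) (tt τ) l' ∧ pathItems lab l' = S') :
    ∀ (Ns : List (Multiset (Σ i : Fin m, Fin (nJ i)))) (PL : List (List A)),
    List.Forall₂ (fun N l => N ≤ pathItems lab l) Ns PL →
    (∀ l ∈ PL, IsPath src dst s t l) →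
    ∃ PL', (∀ l' ∈ PL', IsPath src dst s t l') ∧
      List.Forall₂ (fun l' N => pathItems lab l' = N) PL' Ns ∧
      (∀ e, dst e = t →
        (PL'.map (fun l => l.count e)).sum = (PL.map (fun l => l.count e)).sum) := by
  intro Ns PL hF
  induction hF with
  | nil => exact fun _ => ⟨[], by simp, List.Forall₂.nil, by simp⟩
  | cons h hF ih =>
    rename_i N l Ns' PL'
    intro hpaths
    obtain ⟨l', hl'P, hl'I, hl'C⟩ := replace_path hdag hst honpath harc_t ht_noout hthrough
      hdownward l (hpaths l List.mem_cons_self) N h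
    obtain ⟨PL'', hP1, hP2, hP3⟩ := ih (fun l'' h'' => hpaths _ (List.mem_cons_of_mem l h''))
    refine ⟨l' :: PL'', ?_, List.Forall₂.cons hl'I hP2, ?_⟩
    · intro x hx
      rcases List.mem_cons.mp hx with rfl | hx'
      · exact hl'P
      · exact hP1 x hx'
    · intro e het
      simp only [List.map_cons, List.sum_cons, hl'C e het, hP3 e het]

lemma countP_singleton' {X : Type} (p : X → Prop) [DecidablePred p] (x : X) :
    Multiset.countP p {x} = if p x then 1 else 0 := by
  show Multiset.countP p (x ::ₘ 0) = _
  rw [Multiset.countP_cons, Multiset.countP_zero, zero_add]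

lemma countP_msum {X : Type} (p : X → Prop) [DecidablePred p] :
    ∀ Ls : List (Multiset X), Multiset.countP p Ls.sum = (Ls.map (Multiset.countP p)).sum := by
  intro Ls
  induction Ls with
  | nil => simp
  | cons L Ls ih => simp [Multiset.countP_add, ih]

lemma sum_items_eq {X : Type} (g : Multiset X → ℕ) {lab : A → Option X} :
    ∀ {PL' : List (List A)} {Ns : List (Multiset X)},
    List.Forall₂ (fun l' N => pathItems lab l' = N) PL' Ns →
    (PL'.map (fun l => g (pathItems lab l))).sum = (Ns.map g).sum := by
  intro PL' Ns h
  induction h with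
  | nil => rfl
  | cons h hF ih => simp only [List.map_cons, List.sum_cons, h, ih]

end MVBPaux

/-- Imposing the demand constraints with equality only for item types `k` with
`b k = 1` (and inequality `≥ b k` for all other types) does not change the optimal
objective value of the MVBP arc-flow integer program, compared to imposing
inequality constraints for every item type. -/
theorem mvbp_arcflow_equality_for_unit_demands
    {V A : Type} [Fintype V] [Fintype A] [DecidableEq V] [DecidableEq A]
    (m p q : ℕ) (b : Fin m → ℕ) (nJ : Fin m → ℕ)
    (w : (Σ i : Fin m, Fin (nJ i)) → Fin p → ℕ)
    (Wcap : Fin q → Fin p → ℕ) (C : Fin q → ℕ)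
    (src dst : A → V) (lab : A → Option (Σ i : Fin m, Fin (nJ i)))
    (s t : V) (st tt : Fin q → V) (hst : s ≠ t)
    (ord : V → ℕ) (hdag : ∀ a : A, ord (src a) < ord (dst a))
    (honpath : ∀ a : A, ∃ l₁ l₂ : List A,
      IsPath src dst s (src a) l₁ ∧ IsPath src dst (dst a) t l₂)
    (bt : A → Fin q)
    (harc_s : ∀ a : A, src a = s → (∃ τ, dst a = st τ) ∧ lab a = none)
    (harc_t : ∀ a : A, dst a = t → src a = tt (bt a) ∧ lab a = none)
    (hs_noin : ∀ a : A, dst a ≠ s) (ht_noout : ∀ a : A, src a ≠ t)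
    (hthrough : ∀ l : List A, IsPath src dst s t l → ∀ a ∈ l, dst a = t →
      ∃ mid : List A, IsPath src dst (st (bt a)) (tt (bt a)) mid ∧
        pathItems lab mid = pathItems lab l)
    -- sub-patterns of realizable patterns are realizable (loss arcs allow slack)
    (hdownward : ∀ (τ : Fin q) (l : List A)
        (S' : Multiset (Σ i : Fin m, Fin (nJ i))),
      IsPath src dst (st τ) (tt τ) l → S' ≤ pathItems lab l →
      ∃ l' : List A, IsPath src dst (st τ) (tt τ) l' ∧ pathItems lab l' = S') :
    sInf {c : ℕ | ∃ (f : A → ℕ) (z : ℕ),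
        (∀ v : V,
          (∑ a : A, if dst a = v then f a else 0) + (if v = s then z else 0)
          = (∑ a : A, if src a = v then f a else 0) + (if v = t then z else 0)) ∧
        (∀ k : Fin m,
          b k ≤ ∑ a : A, if ∃ j, lab a = some ⟨k, j⟩ then f a else 0) ∧
        c = ∑ τ : Fin q, C τ *
          (∑ a : A, if src a = tt τ ∧ dst a = t then f a else 0)}
    = sInf {c : ℕ | ∃ (f : A → ℕ) (z : ℕ),
        (∀ v : V,
          (∑ a : A, if dst a = v then f a else 0) + (if v = s then z else 0)
          = (∑ a : A, if src a = v then f a else 0) + (if v = t then z else 0)) ∧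
        (∀ k : Fin m, b k ≠ 1 →
          b k ≤ ∑ a : A, if ∃ j, lab a = some ⟨k, j⟩ then f a else 0) ∧
        (∀ k : Fin m, b k = 1 →
          b k = ∑ a : A, if ∃ j, lab a = some ⟨k, j⟩ then f a else 0) ∧
        c = ∑ τ : Fin q, C τ *
          (∑ a : A, if src a = tt τ ∧ dst a = t then f a else 0)} := by
  open MVBPaux in
  congr 1
  ext c
  simp only [Set.mem_setOf_eq]
  constructor
  · rintro ⟨f, z, hcons, hdem, hc⟩
    obtain ⟨PL, hlen, hpaths, hdec⟩ := MVBPaux.decomp (ord := ord) hdag hs_noin hst z f hcons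
    set M : Multiset (Σ i : Fin m, Fin (nJ i)) := (PL.map (pathItems lab)).sum with hM
    have hfP : ∀ (P : A → Prop) [DecidablePred P],
        (∑ a : A, if P a then f a else 0)
          = (PL.map (fun l => l.countP (fun a => decide (P a)))).sum := by
      intro P _
      rw [Finset.sum_congr rfl (fun a _ => by rw [hdec a]), MVBPaux.flow_sum]
    have hitems_sum : ∀ (PL₀ : List (List A)) (k : Fin m),
        (PL₀.map (fun l => l.countP (fun a => decide (∃ j, lab a = some ⟨k, j⟩)))).sum
          = (PL₀.map (fun l => Multiset.countP (fun x => x.1 = k) (pathItems lab l))).sum := by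
      intro PL₀ k
      congr 1
      exact List.map_congr_left (fun l _ => MVBPaux.countP_items lab k l)
    have hdemM : ∀ k, b k ≤ Multiset.countP (fun x => x.1 = k) M := by
      intro k
      have h := hdem k
      rw [hfP (fun a => ∃ j, lab a = some ⟨k, j⟩), hitems_sum PL k] at h
      rwa [hM, MVBPaux.countP_msum, List.map_map]
    classical
    have hex : ∀ k : Fin m, b k = 1 → ∃ x, x ∈ M ∧ x.1 = k := by
      intro k hk
      have h := hdemM k
      rw [hk] at h
      have hpos : 0 < Multiset.countP (fun x => x.1 = k) M := by omega
      obtain ⟨x, hx, hxk⟩ := Multiset.countP_pos.mp hpos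
      exact ⟨x, hx, hxk⟩
    set g : Fin m → Multiset (Σ i : Fin m, Fin (nJ i)) :=
      fun k => if h : b k = 1 then {(hex k h).choose} else 0 with hg
    set R := ∑ k : Fin m, g k with hR
    set N := M.filter (fun x => b x.1 ≠ 1) + R with hNdef
    have hchoose : ∀ k (h : b k = 1), (hex k h).choose ∈ M ∧ (hex k h).choose.1 = k :=
      fun k h => (hex k h).choose_spec
    have hgcount : ∀ (y : Σ i : Fin m, Fin (nJ i)) (k : Fin m), k ≠ y.1 →
        Multiset.count y (g k) = 0 := by
      intro y k hky
      by_cases h : b k = 1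
      · rw [show g k = {(hex k h).choose} from by simp [hg, h], Multiset.count_singleton,
          if_neg]
        intro he
        apply hky
        rw [he, (hchoose k h).2]
      · rw [show g k = 0 from by simp [hg, h], Multiset.count_zero]
    have hcountR : ∀ y : Σ i : Fin m, Fin (nJ i),
        Multiset.count y R
          = if h : b y.1 = 1 then (if y = (hex y.1 h).choose then 1 else 0) else 0 := by
      intro y
      rw [hR, Multiset.count_sum']
      rw [Finset.sum_eq_single y.1 (fun k _ hky => hgcount y k hky)
        (fun h => absurd (Finset.mem_univ _) h)]
      by_cases h : b y.1 = 1
      · rw [dif_pos h, show g y.1 = {(hex y.1 h).choose} from by simp [hg, h],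
          Multiset.count_singleton]
      · rw [dif_neg h, show g y.1 = 0 from by simp [hg, h], Multiset.count_zero]
    have hNleM : N ≤ M := by
      rw [Multiset.le_iff_count]
      intro y
      rw [hNdef, Multiset.count_add, Multiset.count_filter, hcountR y]
      by_cases hb : b y.1 = 1
      · rw [if_neg (by simpa using hb), dif_pos hb]
        by_cases he : y = (hex y.1 hb).choose
        · rw [if_pos he]
          have hmem := (hchoose y.1 hb).1
          rw [← he] at hmem
          have := Multiset.count_pos.mpr hmem
          omega
        · rw [if_neg he]
          exact Nat.zero_le _
      · rw [if_pos hb, dif_neg hb]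
        omega
    have hcountPR : ∀ k : Fin m,
        Multiset.countP (fun x => x.1 = k) R
          = if b k = 1 then 1 else 0 := by
      intro k
      rw [hR]
      have hhom : Multiset.countP (fun x : Σ i : Fin m, Fin (nJ i) => x.1 = k) (∑ k' : Fin m, g k')
          = ∑ k' : Fin m, Multiset.countP (fun x => x.1 = k) (g k') := by
        rw [← Multiset.coe_countPAddMonoidHom, map_sum]
      rw [hhom]
      rw [Finset.sum_eq_single k ?_ (fun h => absurd (Finset.mem_univ _) h)]
      · by_cases h : b k = 1
        · rw [show g k = {(hex k h).choose} from by simp [hg, h], if_pos h]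
          have h2 := (hchoose k h).2
          rw [MVBPaux.countP_singleton', if_pos h2]
        · rw [show g k = 0 from by simp [hg, h], if_neg h, Multiset.countP_zero]
      · intro k' _ hk'k
        by_cases h : b k' = 1
        · rw [show g k' = {(hex k' h).choose} from by simp [hg, h]]
          have h2 := (hchoose k' h).2
          rw [MVBPaux.countP_singleton', if_neg (fun hh => hk'k (h2.symm.trans hh))]
        · rw [show g k' = 0 from by simp [hg, h], Multiset.countP_zero]
    have hNunit : ∀ k, b k = 1 → Multiset.countP (fun x => x.1 = k) N = 1 := by
      intro k hk
      rw [hNdef, Multiset.countP_add]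
      have h1 : Multiset.countP (fun x => x.1 = k) (M.filter (fun x => b x.1 ≠ 1)) = 0 := by
        rw [Multiset.countP_eq_zero]
        intro y hy hyk
        have h2 := (Multiset.mem_filter.mp hy).2
        rw [hyk] at h2
        exact h2 hk
      rw [h1, hcountPR k, if_pos hk]
    have hNother : ∀ k, b k ≠ 1 →
        Multiset.countP (fun x => x.1 = k) N = Multiset.countP (fun x => x.1 = k) M := by
      intro k hk
      rw [hNdef, Multiset.countP_add, hcountPR k, if_neg hk, add_zero,
        Multiset.countP_filter]
      refine Multiset.countP_congr rfl (fun y _ => propext ?_)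
      constructor
      · exact fun h => h.1
      · intro h
        refine ⟨h, ?_⟩
        rw [h]
        exact hk
    obtain ⟨Ns, hFle, hNsum⟩ := MVBPaux.split_le_sum (PL.map (pathItems lab)) N (hM ▸ hNleM)
    have hFle' : List.Forall₂ (fun N l => N ≤ pathItems lab l) Ns PL :=
      List.forall₂_map_right_iff.mp hFle
    obtain ⟨PL', hP1, hP2, hP3⟩ := MVBPaux.replace_all (ord := ord) hdag hst honpath harc_t
      ht_noout hthrough hdownward Ns PL hFle' hpaths
    have hlen' : PL'.length = z := by
      rw [hP2.length_eq, hFle.length_eq, List.length_map, hlen]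
    refine ⟨fun a => (PL'.map (fun l => l.count a)).sum, z, ?_, ?_, ?_, ?_⟩
    · intro v
      rw [MVBPaux.flow_sum (fun a => dst a = v) PL', MVBPaux.flow_sum (fun a => src a = v) PL',
        ← hlen']
      exact MVBPaux.flows_conservation PL' hP1 v
    · intro k hk
      rw [MVBPaux.flow_sum (fun a => ∃ j, lab a = some ⟨k, j⟩) PL', hitems_sum PL' k,
        MVBPaux.sum_items_eq (Multiset.countP (fun x => x.1 = k)) hP2,
        ← MVBPaux.countP_msum, hNsum, hNother k hk]
      exact hdemM k
    · intro k hk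
      rw [MVBPaux.flow_sum (fun a => ∃ j, lab a = some ⟨k, j⟩) PL', hitems_sum PL' k,
        MVBPaux.sum_items_eq (Multiset.countP (fun x => x.1 = k)) hP2,
        ← MVBPaux.countP_msum, hNsum, hNunit k hk, hk]
    · rw [hc]
      refine Finset.sum_congr rfl (fun τ _ => ?_)
      congr 1
      refine Finset.sum_congr rfl (fun a _ => ?_)
      by_cases hdt : dst a = t
      · by_cases hsr : src a = tt τ
        · rw [if_pos ⟨hsr, hdt⟩, if_pos ⟨hsr, hdt⟩]
          exact (hdec a).trans (hP3 a hdt).symm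
        · rw [if_neg (fun h => hsr h.1), if_neg (fun h => hsr h.1)]
      · rw [if_neg (fun h => hdt h.2), if_neg (fun h => hdt h.2)]
  · rintro ⟨f, z, hcons, h2, h3, hc⟩
    refine ⟨f, z, hcons, ?_, hc⟩
    intro k
    by_cases hk : b k = 1
    · exact le_of_eq (h3 k hk)
    · exact h2 k hk
end
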